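/- For every n ≥ 2 there exists an instance of proxy selection with n voters and 4 proposals in which a single dRep attracts n−1 of the n voters, yet the intrinsic score of the proposal elected under that dRep's presence is only 1, while the optimal intrinsic score is n; hence attracting n−1 voters can still yield only an n-approximation. -/

import Mathlib

open Finset

/-- An instance of proxy selection: `intrinsic i j` is voter `i`'s intrinsic approval of
proposal `j`; `visible i j` records whether this preference is revealed to the voter
(the revealed preference is `some (intrinsic i j)` if visible and `⊥` otherwise). -/
structure PSInstance (n m : ℕ) where
  intrinsic : Fin n → Fin m → Bool
  visible : Fin n → Fin m → Bool

namespace PSInstance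

variable {n m : ℕ}

/-- Revealed preference of voter `i` on proposal `j`. -/
def revealed (I : PSInstance n m) (i : Fin n) (j : Fin m) : Option Bool :=
  if I.visible i j then some (I.intrinsic i j) else none

/-- The revealed set `R_i` of voter `i`. -/
def Rset (I : PSInstance n m) (i : Fin n) : Finset (Fin m) :=
  univ.filter fun j => I.visible i j

/-- `m_i = |R_i|`. -/
def mi (I : PSInstance n m) (i : Fin n) : ℕ := (I.Rset i).card

/-- Hamming distance between voter `i`'s revealed ballot and type `t`, restricted to `R_i`. -/
def dist (I : PSInstance n m) (i : Fin n) (t : Fin m → Bool) : ℕ :=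
  (univ.filter fun j => I.visible i j ∧ I.intrinsic i j ≠ t j).card

/-- Voter `i` (with reluctance parameter `k`) is attracted by a dRep of type `t`. -/
def Attracted (I : PSInstance n m) (k : ℕ) (i : Fin n) (t : Fin m → Bool) : Prop :=
  I.dist i t ≤ (I.mi i - k) / 2

instance (I : PSInstance n m) (k : ℕ) (i : Fin n) (t : Fin m → Bool) :
    Decidable (I.Attracted k i t) := by unfold Attracted; exact inferInstance

/-- Intrinsic approval score of proposal `j`. -/
def sc (I : PSInstance n m) (j : Fin m) : ℕ :=
  (univ.filter fun i => I.intrinsic i j = true).card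

/-- Revealed approval score of proposal `j`. -/
def rsc (I : PSInstance n m) (j : Fin m) : ℕ :=
  (univ.filter fun i => I.visible i j ∧ I.intrinsic i j = true).card

/-- `j` is an intrinsically optimal proposal (`win(P)`). -/
def IsOpt (I : PSInstance n m) (j : Fin m) : Prop := ∀ j', I.sc j' ≤ I.sc j

/-- Total score of proposal `j` given a family `D` of dReps and a delegation assignment
`deleg` (delegating voters contribute through their dRep's ballot, the rest vote their
revealed preferences directly). -/
def totalScore {ι : Type} (I : PSInstance n m) (D : ι → Fin m → Bool)
    (deleg : Fin n → Option ι) (j : Fin m) : ℕ :=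
  (univ.filter fun i => (match deleg i with
    | some d => D d j
    | none => I.visible i j && I.intrinsic i j) = true).card

/-- A delegation assignment is valid (w.r.t. per-voter reluctance parameters `k`) if every
delegating voter is attracted by their chosen dRep, and every voter attracted by at least
one dRep delegates (to an arbitrary one of them). -/
def ValidDeleg {ι : Type} (I : PSInstance n m) (k : Fin n → ℕ) (D : ι → Fin m → Bool)
    (deleg : Fin n → Option ι) : Prop :=
  (∀ i d, deleg i = some d → I.Attracted (k i) i (D d)) ∧
  (∀ i, (∃ d, I.Attracted (k i) i (D d)) → deleg i ≠ none)

/-- `j` is elected: it maximizes total score, ties broken in favor of maximum intrinsic score. -/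
def Elected {ι : Type} (I : PSInstance n m) (D : ι → Fin m → Bool)
    (deleg : Fin n → Option ι) (j : Fin m) : Prop :=
  (∀ j', I.totalScore D deleg j' ≤ I.totalScore D deleg j) ∧
  (∀ j', I.totalScore D deleg j' = I.totalScore D deleg j → I.sc j' ≤ I.sc j)

/-- `j` is elected when ties are broken in favor of maximum *revealed* score. -/
def ElectedRev {ι : Type} (I : PSInstance n m) (D : ι → Fin m → Bool)
    (deleg : Fin n → Option ι) (j : Fin m) : Prop :=
  (∀ j', I.totalScore D deleg j' ≤ I.totalScore D deleg j) ∧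
  (∀ j', I.totalScore D deleg j' = I.totalScore D deleg j → I.rsc j' ≤ I.rsc j)

end PSInstance


section Aux

/-- The hard instance: everyone intrinsically approves proposal 0 (invisible);
only voter 1 approves proposal 1; voter 0 reveals only proposal 1 (disapproving),
all other voters reveal only proposals 2,3 (disapproving). -/
def hardI (n : ℕ) : PSInstance n 4 where
  intrinsic i j := decide (j = (0 : Fin 4) ∨ (i.val = 1 ∧ j = (1 : Fin 4)))
  visible i j := if i.val = 0 then decide (j = (1 : Fin 4)) else decide (j = (2 : Fin 4) ∨ j = (3 : Fin 4))

def hardT : Fin 4 → Bool := fun j => decide (j = (1 : Fin 4))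

lemma hard_attracted (n : ℕ) (i : Fin n) :
    (hardI n).Attracted 0 i hardT ↔ i.val ≠ 0 := by
  unfold PSInstance.Attracted PSInstance.dist PSInstance.mi PSInstance.Rset hardI hardT
  rcases eq_or_ne i.val 0 with h | h
  · simp only [h]
    constructor
    · intro hle; exact absurd hle (by decide)
    · intro hc; exact absurd rfl hc
  · have h1 : (i.val = 0) = False := by simp [h]
    simp only [h1, if_false]
    constructor
    · intro _; exact h
    · intro _
      have hd : (Finset.univ.filter fun j : Fin 4 =>
          (decide (j = (2:Fin 4) ∨ j = (3:Fin 4)) = true) ∧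
          decide (j = (0:Fin 4) ∨ (i.val = 1 ∧ j = (1:Fin 4))) ≠ decide (j = (1:Fin 4))) = ∅ := by
        rw [Finset.filter_eq_empty_iff]; intro j _; fin_cases j <;> simp
      rw [hd]
      simp

end Aux

/-- For every `n ≥ 2` there is an instance with `n` voters and 4 proposals
where a single dRep attracts `n - 1` voters, the optimal intrinsic score is `n`, yet the
elected proposal always has intrinsic score 1 (an `n`-approximation only). -/
theorem stmt0 (n : ℕ) (hn : 2 ≤ n) :
    ∃ (I : PSInstance n 4) (t : Fin 4 → Bool),
      (Finset.univ.filter fun i => I.Attracted 0 i t).card = n - 1 ∧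
      (∃ j, I.IsOpt j ∧ I.sc j = n) ∧
      (∀ deleg : Fin n → Option Unit,
        I.ValidDeleg (fun _ => 0) (fun _ => t) deleg →
        ∀ j, I.Elected (fun _ => t) deleg j → I.sc j = 1) := by
  haveI : NeZero n := ⟨by omega⟩
  have hone : (1 : Fin n).val = 1 := by
    simp [Fin.val_one', Nat.mod_eq_of_lt (by omega : 1 < n)]
  refine ⟨hardI n, hardT, ?_, ?_, ?_⟩
  · have hfe : (Finset.univ.filter fun i : Fin n => (hardI n).Attracted 0 i hardT) =
        Finset.univ.filter fun i => i ≠ (0 : Fin n) := by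
      apply Finset.filter_congr; intro i _
      simp [hard_attracted, Fin.ext_iff, -Fin.val_eq_zero_iff]
    rw [hfe, Finset.filter_ne', Finset.card_erase_of_mem (Finset.mem_univ _),
      Finset.card_univ, Fintype.card_fin]
  · have hsc : (hardI n).sc 0 = n := by
      unfold PSInstance.sc hardI
      rw [Finset.filter_true_of_mem (fun i _ => by simp)]
      simp
    refine ⟨0, fun j' => ?_, hsc⟩
    rw [hsc]
    exact le_trans (Finset.card_filter_le _ _) (by simp)
  · rintro deleg ⟨hv1, hv2⟩ j hj
    have hdel : ∀ i : Fin n, deleg i = if i.val = 0 then none else some () := by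
      intro i
      rcases eq_or_ne i.val 0 with h | h
      · rw [if_pos h]
        cases hdi : deleg i with
        | none => rfl
        | some d => exact absurd ((hard_attracted n i).mp (hv1 i d hdi)) (by simp [h])
      · rw [if_neg h]
        have hne := hv2 i ⟨(), (hard_attracted n i).mpr h⟩
        cases hdi : deleg i with
        | none => exact absurd hdi hne
        | some d => cases d; rfl
    have hts : ∀ j', (hardI n).totalScore (fun _ => hardT) deleg j' =
        if j' = (1 : Fin 4) then n - 1 else 0 := by
      intro j'
      unfold PSInstance.totalScore
      rcases eq_or_ne j' (1 : Fin 4) with hj' | hj'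
      · subst hj'
        rw [if_pos rfl, Finset.card_filter]
        refine Eq.trans (Finset.sum_congr rfl
          (g := fun i : Fin n => if i ≠ (0 : Fin n) then 1 else 0) fun i _ => ?_) ?_
        · rw [hdel i]
          rcases eq_or_ne i.val 0 with h | h
          · simp [h, hardI, hardT, Fin.ext_iff, -Fin.val_eq_zero_iff]
          · simp [h, hardI, hardT, Fin.ext_iff, -Fin.val_eq_zero_iff]
        · rw [← Finset.card_filter, Finset.filter_ne',
            Finset.card_erase_of_mem (Finset.mem_univ _), Finset.card_univ, Fintype.card_fin]
      · rw [if_neg hj', Finset.card_eq_zero, Finset.filter_eq_empty_iff]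
        intro i _
        rw [hdel i]
        rcases eq_or_ne i.val 0 with h | h
        · simp only [if_pos h]
          fin_cases j' <;> simp_all [hardI, hardT]
        · simp only [if_neg h]
          fin_cases j' <;> simp_all [hardT]
    have hj1 : j = (1 : Fin 4) := by
      by_contra hne
      have := hj.1 (1 : Fin 4)
      rw [hts, hts, if_pos rfl, if_neg hne] at this
      omega
    subst hj1
    have hfe : (Finset.univ.filter fun i : Fin n => (hardI n).intrinsic i 1 = true) =
        {(1 : Fin n)} := by
      ext i
      simp [hardI, Fin.ext_iff, hone, Nat.mod_eq_of_lt (show 1 < n by omega), -Fin.val_eq_zero_iff]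
    unfold PSInstance.sc
    rw [hfe, Finset.card_singleton]
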